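/- Let G be a powerful finite p-group and e a positive integer. Then [G^e, G^e] ≤ (G^e)^{pe}, i.e. the subgroup R = G^e satisfies [R,R] ≤ R^{pe}. -/

import Mathlib

/-- The subgroup generated by the `n`-th powers of elements of `H`. -/
def powOf {G : Type} [Group G] (H : Subgroup G) (n : ℕ) : Subgroup G :=
  Subgroup.closure ((fun x => x ^ n) '' (H : Set G))

/-- A finite `p`-group `G` is powerful if `[G,G] ≤ G^p` for odd `p`, and `[G,G] ≤ G^4`
for `p = 2`. -/
def IsPowerful (G : Type) [Group G] (p : ℕ) : Prop :=
  if p = 2 then ⁅(⊤ : Subgroup G), (⊤ : Subgroup G)⁆ ≤ powOf ⊤ 4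
  else ⁅(⊤ : Subgroup G), (⊤ : Subgroup G)⁆ ≤ powOf ⊤ p

namespace PowerfulAux
open scoped commutatorElement

variable {G : Type} [Group G]

theorem mem_powOf {H : Subgroup G} {n : ℕ} {h : G} (hh : h ∈ H) : h ^ n ∈ powOf H n :=
  Subgroup.subset_closure ⟨h, hh, rfl⟩

theorem powOf_le {H K : Subgroup G} {n : ℕ} (hK : ∀ h ∈ H, h ^ n ∈ K) :
    powOf H n ≤ K := by
  apply (Subgroup.closure_le K).mpr
  rintro x ⟨h, hh, rfl⟩
  exact hK h hh

theorem map_powOf {H' : Type} [Group H'] (f : G →* H') (H : Subgroup G) (n : ℕ) :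
    (powOf H n).map f = powOf (H.map f) n := by
  unfold powOf
  rw [MonoidHom.map_closure]
  congr 1
  ext y
  constructor
  · rintro ⟨-, ⟨h, hh, rfl⟩, rfl⟩
    exact ⟨f h, ⟨h, hh, rfl⟩, (map_pow f h n).symm⟩
  · rintro ⟨-, ⟨h, hh, rfl⟩, rfl⟩
    exact ⟨h ^ n, ⟨h, hh, rfl⟩, map_pow f h n⟩

theorem conj_pow_eq (g a : G) (n : ℕ) : (g * a * g⁻¹) ^ n = g * a ^ n * g⁻¹ := by
  induction n with
  | zero => simp
  | succ n ih => rw [pow_succ, pow_succ, ih]; group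

theorem powOf_normal {H : Subgroup G} (hH : H.Normal) (n : ℕ) : (powOf H n).Normal := by
  constructor
  intro x hx g
  induction hx using Subgroup.closure_induction with
  | mem y hy =>
    obtain ⟨h, hh, rfl⟩ := hy
    rw [← conj_pow_eq]
    exact mem_powOf (hH.conj_mem h hh g)
  | one => simpa using (powOf H n).one_mem
  | mul a b _ _ ha hb =>
    have : g * (a * b) * g⁻¹ = (g * a * g⁻¹) * (g * b * g⁻¹) := by group
    rw [this]; exact mul_mem ha hb
  | inv a _ ha =>
    have : g * a⁻¹ * g⁻¹ = (g * a * g⁻¹)⁻¹ := by group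
    rw [this]; exact inv_mem ha

/-- commutator with a closure, reduced to generators on the right. -/
theorem commutator_closure_le {H T : Subgroup G} (S : Set G) (hT : T.Normal)
    (h : ∀ a ∈ H, ∀ s ∈ S, ⁅a, s⁆ ∈ T) : ⁅H, Subgroup.closure S⁆ ≤ T := by
  rw [Subgroup.commutator_le]
  intro a ha s hs
  induction hs using Subgroup.closure_induction with
  | mem x hx => exact h a ha x hx
  | one =>
    have : ⁅a, (1 : G)⁆ = 1 := by simp only [commutatorElement_def]; group
    rw [this]; exact T.one_mem
  | mul x y hx hy ihx ihy =>
    have : ⁅a, x * y⁆ = ⁅a, x⁆ * (x * ⁅a, y⁆ * x⁻¹) := by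
      simp only [commutatorElement_def]; group
    rw [this]; exact mul_mem ihx (hT.conj_mem _ ihy x)
  | inv x hx ihx =>
    have h1 : ⁅a, x⁻¹⁆ = x⁻¹ * ⁅a, x⁆⁻¹ * (x⁻¹)⁻¹ := by
      simp only [commutatorElement_def]; group
    rw [h1]; exact hT.conj_mem _ (inv_mem ihx) x⁻¹

theorem commutator_powOf_le {H K T : Subgroup G} {n : ℕ} (hT : T.Normal)
    (h : ∀ a ∈ H, ∀ x ∈ K, ⁅a, x ^ n⁆ ∈ T) : ⁅H, powOf K n⁆ ≤ T := by
  have hrw : powOf K n = Subgroup.closure ((fun x => x ^ n) '' (K : Set G)) := rfl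
  rw [hrw]
  apply commutator_closure_le _ hT
  rintro a ha s ⟨x, hx, rfl⟩
  exact h a ha x hx

theorem comm_pow_formula (v z : G) (n : ℕ)
    (h1 : Commute ⁅z, ⁅v, z⁆⁆ z) (h2 : Commute ⁅z, ⁅v, z⁆⁆ ⁅v, z⁆) :
    ⁅v, z ^ n⁆ = ⁅v, z⁆ ^ n * ⁅z, ⁅v, z⁆⁆ ^ n.choose 2 := by
  induction n with
  | zero => simp only [pow_zero, Nat.choose, commutatorElement_def]; group
  | succ n ih =>
    have key : ⁅v, z ^ (n + 1)⁆ = ⁅v, z⁆ * (z * ⁅v, z ^ n⁆ * z⁻¹) := by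
      rw [pow_succ']
      simp only [commutatorElement_def]; group
    have hnk : (n + 1).choose 2 = n + n.choose 2 := by
      rw [Nat.choose_succ_succ, Nat.choose_one_right]
    rw [key, ih, hnk]
    set c := ⁅v, z⁆ with hc
    set ε := ⁅z, c⁆ with hε
    have e2 : z * ε * z⁻¹ = ε := by
      rw [h1.symm.eq]; group
    have e3 : z * c * z⁻¹ = ε * c := by
      rw [hε]; simp only [commutatorElement_def]; group
    calc c * (z * (c ^ n * ε ^ n.choose 2) * z⁻¹)
        = c * ((z * c * z⁻¹) ^ n * (z * ε * z⁻¹) ^ n.choose 2) := by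
          rw [conj_pow_eq, conj_pow_eq]; group
      _ = c * ((ε * c) ^ n * ε ^ n.choose 2) := by rw [e2, e3]
      _ = c * (ε ^ n * c ^ n * ε ^ n.choose 2) := by rw [h2.mul_pow]
      _ = c * (c ^ n * ε ^ n * ε ^ n.choose 2) := by rw [(h2.pow_pow n n).eq]
      _ = (c * c ^ n) * (ε ^ n * ε ^ n.choose 2) := by group
      _ = c ^ (n + 1) * ε ^ (n + n.choose 2) := by rw [← pow_succ', ← pow_add]

/-- `Qs p G m = G^{p^m}`. -/
def Qs (p : ℕ) (G : Type) [Group G] (m : ℕ) : Subgroup G := powOf ⊤ (p ^ m)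

theorem Qs_def (p m : ℕ) : Qs p G m = powOf (⊤ : Subgroup G) (p ^ m) := rfl

theorem mem_Qs (p m : ℕ) (x : G) : x ^ p ^ m ∈ Qs p G m := mem_powOf (Subgroup.mem_top x)

theorem Qs_zero (p : ℕ) : Qs p G 0 = ⊤ := by
  rw [eq_top_iff]
  intro x _
  have := mem_Qs (G := G) p 0 x
  simpa using this

theorem Qs_anti (p : ℕ) {a b : ℕ} (h : a ≤ b) : Qs p G b ≤ Qs p G a := by
  apply powOf_le
  intro x _
  have : x ^ p ^ b = (x ^ p ^ (b - a)) ^ p ^ a := by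
    rw [← pow_mul, ← pow_add, Nat.sub_add_cancel h]
  rw [this]
  exact mem_powOf (Subgroup.mem_top _)

theorem exp_of_Qs_eq_bot {p t : ℕ} (h : Qs p G t = ⊥) (x : G) : x ^ p ^ t = 1 := by
  have := mem_Qs (G := G) p t x
  rw [h, Subgroup.mem_bot] at this
  exact this

theorem le_of_map_le {N B A : Subgroup G} [hN : N.Normal] (hNB : N ≤ B)
    (h : Subgroup.map (QuotientGroup.mk' N) A ≤ Subgroup.map (QuotientGroup.mk' N) B) :
    A ≤ B := by
  have h1 : A ≤ Subgroup.comap (QuotientGroup.mk' N) (Subgroup.map (QuotientGroup.mk' N) A) :=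
    Subgroup.le_comap_map _ _
  have h2 := h1.trans (Subgroup.comap_mono h)
  rwa [Subgroup.comap_map_eq, QuotientGroup.ker_mk', sup_eq_left.mpr hNB] at h2

theorem normal_of_le_center {N : Subgroup G} (h : N ≤ Subgroup.center G) : N.Normal := by
  constructor
  intro x hx g
  have hcomm := (Subgroup.mem_center_iff.mp (h hx)) g
  have : g * x * g⁻¹ = x := by rw [hcomm]; group
  rwa [this]

theorem exists_le_center {p : ℕ} (hp : p.Prime) [Finite G] (hG : IsPGroup p G)
    {K : Subgroup G} (hKn : K.Normal) (hK : K ≠ ⊥) :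
    ∃ a : G, a ∈ K ∧ a ∈ Subgroup.center G ∧ a ≠ 1 ∧ a ^ p = 1 := by
  haveI : Fact p.Prime := ⟨hp⟩
  haveI := hKn
  have hG' : IsPGroup p (ConjAct G) := hG.of_equiv ConjAct.toConjAct
  have hKp : IsPGroup p K := hG.to_subgroup K
  have hcard : p ∣ Nat.card K := by
    obtain ⟨n, hn⟩ := IsPGroup.iff_card.mp hKp
    have hnt : Nontrivial K := (Subgroup.nontrivial_iff_ne_bot K).mpr hK
    have h1 : 1 < Nat.card K := Finite.one_lt_card
    rcases n with - | n
    · rw [pow_zero] at hn; omega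
    · rw [hn]; exact dvd_pow_self p (Nat.succ_ne_zero n)
  have h1fix : (1 : K) ∈ MulAction.fixedPoints (ConjAct G) K := by
    intro g
    apply Subtype.ext
    rw [ConjAct.Subgroup.val_conj_smul]
    show ConjAct.ofConjAct g * ((1 : K) : G) * (ConjAct.ofConjAct g)⁻¹ = _
    simp
  obtain ⟨b, hbfix, hb1⟩ :=
    hG'.exists_fixed_point_of_prime_dvd_card_of_fixed_point K hcard h1fix
  have hbcen : (b : G) ∈ Subgroup.center G := by
    rw [Subgroup.mem_center_iff]
    intro g
    have hfix := hbfix (ConjAct.toConjAct g)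
    have hval : g * (b : G) * g⁻¹ = (b : G) := by
      have := congrArg (Subtype.val) hfix
      rwa [ConjAct.Subgroup.val_conj_smul, ConjAct.smul_def, ConjAct.ofConjAct_toConjAct] at this
    calc g * (b : G) = (g * b * g⁻¹) * g := by group
      _ = b * g := by rw [hval]
  have hbne : (b : G) ≠ 1 := by
    intro h
    apply hb1; exact Subtype.ext (by simp [h])
  obtain ⟨k, hk⟩ := hG (b : G)
  have hex : ∃ k, (b : G) ^ p ^ k = 1 := ⟨k, hk⟩
  classical
  have hk0 : (b : G) ^ p ^ (Nat.find hex) = 1 := Nat.find_spec hex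
  have hk0pos : 0 < Nat.find hex := by
    rcases Nat.eq_zero_or_pos (Nat.find hex) with h0 | h
    · exfalso; apply hbne; simpa [h0] using hk0
    · exact h
  refine ⟨(b : G) ^ p ^ (Nat.find hex - 1), pow_mem b.2 _, pow_mem hbcen _, ?_, ?_⟩
  · exact Nat.find_min hex (Nat.sub_lt hk0pos one_pos)
  · have heq : p ^ (Nat.find hex - 1) * p = p ^ (Nat.find hex) := by
      rw [← pow_succ, Nat.sub_add_cancel hk0pos]
    rw [← pow_mul, heq]
    exact hk0

theorem zpowers_aux {p : ℕ} {a : G} (hc : a ∈ Subgroup.center G) (hap : a ^ p = 1) :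
    ∀ x ∈ Subgroup.zpowers a, x ∈ Subgroup.center G ∧ x ^ p = 1 := by
  intro x hx
  obtain ⟨z, rfl⟩ := Subgroup.mem_zpowers_iff.mp hx
  constructor
  · exact Subgroup.zpow_mem _ hc z
  · rw [← zpow_natCast, ← zpow_mul, mul_comm, zpow_mul, zpow_natCast, hap, one_zpow]

theorem map_Qs {H : Type} [Group H] (f : G →* H) (hf : Function.Surjective f) (p m : ℕ) :
    (Qs p G m).map f = Qs p H m := by
  rw [Qs, Qs, map_powOf, Subgroup.map_top_of_surjective f hf]

theorem isPowerful_map {H : Type} [Group H] (f : G →* H) (hf : Function.Surjective f)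
    {q : ℕ} (h : IsPowerful G q) : IsPowerful H q := by
  unfold IsPowerful at *
  split_ifs at h ⊢ with h2 <;>
  · have hm := Subgroup.map_mono (f := f) h
    rwa [Subgroup.map_commutator, Subgroup.map_top_of_surjective f hf, map_powOf,
      Subgroup.map_top_of_surjective f hf] at hm

theorem card_quotient_lt [Finite G] {N : Subgroup G} [N.Normal] (hN : N ≠ ⊥) :
    Nat.card (G ⧸ N) < Nat.card G := by
  have h1 : Nat.card N * N.index = Nat.card G := Subgroup.card_mul_index N
  have h2 : 2 ≤ Nat.card N := by
    have : Nontrivial N := (Subgroup.nontrivial_iff_ne_bot N).mpr hN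
    exact Finite.one_lt_card
  have h3 : Nat.card (G ⧸ N) = N.index := (Subgroup.index_eq_card N).symm
  have h4 : 0 < N.index := by
    have : 0 < Nat.card G := Nat.card_pos
    by_contra h
    push_neg at h
    interval_cases hi : N.index
    omega
  have h5 : 2 * N.index ≤ Nat.card G := by
    calc 2 * N.index ≤ Nat.card N * N.index := Nat.mul_le_mul_right _ h2
      _ = Nat.card G := h1
  omega

/-- killing the prime-to-p part of the exponent -/
theorem powOf_coprime {p : ℕ} (hp : p.Prime) (hG : IsPGroup p G) (H : Subgroup G)
    (k u : ℕ) (hu : ¬ p ∣ u) : powOf H (p ^ k * u) = powOf H (p ^ k) := by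
  apply le_antisymm
  · apply powOf_le
    intro h hh
    have : h ^ (p ^ k * u) = (h ^ u) ^ p ^ k := by rw [← pow_mul, mul_comm]
    rw [this]
    exact mem_powOf (Subgroup.pow_mem H hh u)
  · apply powOf_le
    intro h hh
    obtain ⟨n, hn⟩ := hG h
    by_cases ho : orderOf h ≤ 1
    · have h1 : h = 1 := by
        have : orderOf h = 1 := by
          have : 0 < orderOf h := by
            have : IsOfFinOrder h := isOfFinOrder_iff_pow_eq_one.mpr
              ⟨p ^ n, pow_pos hp.pos n, hn⟩
            exact this.orderOf_pos
          omega
        exact orderOf_eq_one_iff.mp this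
      rw [h1, one_pow]
      exact Subgroup.one_mem _
    · push_neg at ho
      have hdvd : orderOf h ∣ p ^ n := orderOf_dvd_of_pow_eq_one hn
      obtain ⟨t, -, hto⟩ := (Nat.dvd_prime_pow hp).mp hdvd
      have hcop : Nat.Coprime u (orderOf h) := by
        rw [hto]
        exact (((Nat.Prime.coprime_iff_not_dvd hp).mpr hu).pow_left t).symm
      obtain ⟨v, -, hv⟩ := Nat.exists_mul_mod_eq_one_of_coprime hcop ho
      have hkey : (h ^ v) ^ (p ^ k * u) = h ^ p ^ k := by
        rw [← pow_mul]
        have : v * (p ^ k * u) = (u * v) * p ^ k := by ring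
        rw [this, pow_mul]
        congr 1
        calc h ^ (u * v) = h ^ (u * v % orderOf h) := (pow_mod_orderOf h (u * v)).symm
          _ = h ^ 1 := by rw [hv]
          _ = h := pow_one h
      rw [← hkey]
      exact mem_powOf (Subgroup.pow_mem H hh v)

end PowerfulAux
namespace PowerfulAux
open scoped commutatorElement

theorem grand (p : ℕ) (hp : p.Prime) :
    ∀ (n : ℕ) (G : Type) [Group G] [Finite G],
      Nat.card G ≤ n → IsPGroup p G → IsPowerful G p →
      (∀ m : ℕ, powOf (Qs p G m) p ≤ Qs p G (m + 1)) ∧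
      (∀ i j : ℕ, ⁅Qs p G i, Qs p G j⁆ ≤ Qs p G (i + j + 1)) := by
  intro n
  induction n with
  | zero =>
    intro G _ _ hcard _ _
    exact absurd hcard (by have : 0 < Nat.card G := Nat.card_pos; omega)
  | succ n IH =>
    intro G instG instF hcard hG hpow
    haveI hQsn : ∀ m : ℕ, (Qs p G m).Normal := fun m => powOf_normal inferInstance _
    have quotIH : ∀ (N : Subgroup G) [N.Normal], N ≠ ⊥ →
        (∀ m, Subgroup.map (QuotientGroup.mk' N) (powOf (Qs p G m) p)
            ≤ Subgroup.map (QuotientGroup.mk' N) (Qs p G (m + 1))) ∧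
        (∀ i j, Subgroup.map (QuotientGroup.mk' N) ⁅Qs p G i, Qs p G j⁆
            ≤ Subgroup.map (QuotientGroup.mk' N) (Qs p G (i + j + 1))) := by
      intro N hN hNbot
      have hsurj := QuotientGroup.mk'_surjective N
      have hcard' : Nat.card (G ⧸ N) ≤ n := by
        have := card_quotient_lt (G := G) (N := N) hNbot
        omega
      obtain ⟨hP', hM'⟩ := IH (G ⧸ N) hcard' (hG.to_quotient N)
        (isPowerful_map (QuotientGroup.mk' N) hsurj hpow)
      constructor
      · intro m
        rw [map_powOf, map_Qs _ hsurj, map_Qs _ hsurj]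
        exact hP' m
      · intro i j
        rw [Subgroup.map_commutator, map_Qs _ hsurj, map_Qs _ hsurj, map_Qs _ hsurj]
        exact hM' i j
    have reduce : ∀ (K : Subgroup G), K.Normal →
        (∀ (N : Subgroup G) [N.Normal], N ≠ ⊥ →
          Subgroup.map (QuotientGroup.mk' N) K = ⊥) →
        ∀ x ∈ K, x ∈ Subgroup.center G ∧ x ^ p = 1 := by
      intro K hKn hmap
      by_cases hKbot : K = ⊥
      · intro x hx
        rw [hKbot, Subgroup.mem_bot] at hx
        subst hx
        exact ⟨Subgroup.one_mem _, one_pow p⟩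
      · obtain ⟨a, haK, hacen, hane, hap⟩ := exists_le_center hp hG hKn hKbot
        haveI hNn : (Subgroup.zpowers a).Normal :=
          normal_of_le_center (Subgroup.zpowers_le.mpr hacen)
        have hNne : Subgroup.zpowers a ≠ ⊥ := by
          rw [Ne, Subgroup.zpowers_eq_bot]; exact hane
        have hKle : K ≤ Subgroup.zpowers a := by
          apply le_of_map_le (le_refl (Subgroup.zpowers a))
          rw [hmap (Subgroup.zpowers a) hNne]
          exact bot_le
        intro x hx
        exact zpowers_aux hacen hap x (hKle hx)
    -- Part 1: the power statements P(m)
    have hPall : ∀ m, powOf (Qs p G m) p ≤ Qs p G (m + 1) := by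
      intro m
      rcases Nat.eq_zero_or_pos m with hm0 | hm1
      · subst hm0
        apply powOf_le
        intro h _
        have := mem_Qs (G := G) p 1 h
        rwa [pow_one] at this
      by_cases hbot : Qs p G (m + 1) = ⊥
      · -- reduced case
        obtain ⟨m', rfl⟩ : ∃ m', m = m' + 1 := ⟨m - 1, by omega⟩
        have hB : ∀ x ∈ ⁅Qs p G m', Qs p G (m' + 1)⁆,
            x ∈ Subgroup.center G ∧ x ^ p = 1 := by
          apply reduce _ inferInstance
          intro N hN hNne
          have h1 := (quotIH N hNne).2 m' (m' + 1)
          have h2 : Qs p G (m' + (m' + 1) + 1) ≤ Qs p G (m' + 1 + 1) :=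
            Qs_anti p (by omega)
          have h3 := h1.trans (Subgroup.map_mono h2)
          rw [hbot, Subgroup.map_bot] at h3
          exact le_bot_iff.mp h3
        have habel : ⁅Qs p G (m' + 1), Qs p G (m' + 1)⁆ ≤ (⊥ : Subgroup G) := by
          rw [Qs_def p (m' + 1)]
          apply commutator_powOf_le inferInstance
          intro a ha x _
          rw [Subgroup.mem_bot]
          have hsz : x ^ p ^ (m' + 1) = (x ^ p ^ m') ^ p := by
            rw [← pow_mul, ← pow_succ]
          set z : G := x ^ p ^ m' with hz
          have hzQ : z ∈ Qs p G m' := mem_Qs p m' x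
          have hcB : ⁅a, z⁆ ∈ ⁅Qs p G m', Qs p G (m' + 1)⁆ := by
            rw [Subgroup.commutator_comm]
            exact Subgroup.commutator_mem_commutator ha hzQ
          obtain ⟨hccen, hcp⟩ := hB _ hcB
          have hε : ⁅z, ⁅a, z⁆⁆ = 1 :=
            commutatorElement_eq_one_iff_commute.mpr
              (Subgroup.mem_center_iff.mp hccen z)
          rw [hsz, comm_pow_formula a z p (by rw [hε]; exact Commute.one_left _)
            (by rw [hε]; exact Commute.one_left _), hε, hcp, one_pow, one_mul]
        have hexp1 : ∀ y ∈ Qs p G (m' + 1), y ^ p = 1 := by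
          intro y hy
          have hy' : y ∈ Subgroup.closure
              ((fun x => x ^ p ^ (m' + 1)) '' ((⊤ : Subgroup G) : Set G)) := hy
          clear hy
          induction hy' using Subgroup.closure_induction with
          | mem x hx =>
            obtain ⟨x, -, rfl⟩ := hx
            rw [← pow_mul, ← pow_succ]
            exact exp_of_Qs_eq_bot hbot x
          | one => exact one_pow p
          | mul x y hx hy ihx ihy =>
            have hcomm : Commute x y := by
              have hmem := habel (Subgroup.commutator_mem_commutator hx hy)
              rw [Subgroup.mem_bot] at hmem
              exact commutatorElement_eq_one_iff_commute.mp hmem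
            rw [hcomm.mul_pow, ihx, ihy, one_mul]
          | inv x hx ihx => rw [inv_pow, ihx, inv_one]
        rw [hbot]
        apply powOf_le
        intro h hh
        rw [Subgroup.mem_bot]
        exact hexp1 h hh
      · -- quotient reduction
        obtain ⟨a, haK, hacen, hane, hap⟩ :=
          exists_le_center hp hG (hQsn (m + 1)) hbot
        haveI hNn : (Subgroup.zpowers a).Normal :=
          normal_of_le_center (Subgroup.zpowers_le.mpr hacen)
        have hNne : Subgroup.zpowers a ≠ ⊥ := by
          rw [Ne, Subgroup.zpowers_eq_bot]; exact hane
        have hNle : Subgroup.zpowers a ≤ Qs p G (m + 1) := Subgroup.zpowers_le.mpr haK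
        exact le_of_map_le hNle ((quotIH _ hNne).1 m)
    -- quotient reduction for the commutator statements
    have quotReduce : ∀ i j : ℕ, Qs p G (i + j + 1) ≠ ⊥ →
        ⁅Qs p G i, Qs p G j⁆ ≤ Qs p G (i + j + 1) := by
      intro i j hbot
      obtain ⟨a, haK, hacen, hane, hap⟩ := exists_le_center hp hG (hQsn _) hbot
      haveI hNn : (Subgroup.zpowers a).Normal :=
        normal_of_le_center (Subgroup.zpowers_le.mpr hacen)
      have hNne : Subgroup.zpowers a ≠ ⊥ := by
        rw [Ne, Subgroup.zpowers_eq_bot]; exact hane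
      have hNle : Subgroup.zpowers a ≤ Qs p G (i + j + 1) := Subgroup.zpowers_le.mpr haK
      exact le_of_map_le hNle ((quotIH _ hNne).2 i j)
    -- Part 2: the commutator statements M(i,j)
    have hMall : ∀ m i j, i + j = m → ⁅Qs p G i, Qs p G j⁆ ≤ Qs p G (m + 1) := by
      intro m
      induction m using Nat.strong_induction_on with
      | _ m IHm =>
      have claim0 : ⁅Qs p G 0, Qs p G m⁆ ≤ Qs p G (m + 1) := by
        rcases Nat.eq_zero_or_pos m with hm0 | hm1
        · -- base : powerfulness
          subst hm0
          rw [Qs_zero]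
          unfold IsPowerful at hpow
          by_cases hp2 : p = 2
          · rw [if_pos hp2] at hpow
            refine hpow.trans ?_
            have h4 : powOf (⊤ : Subgroup G) 4 = Qs p G 2 := by
              rw [Qs_def, hp2]; norm_num
            rw [h4]
            exact Qs_anti p (by omega)
          · rw [if_neg hp2] at hpow
            refine hpow.trans ?_
            have h1 : powOf (⊤ : Subgroup G) p = Qs p G 1 := by rw [Qs_def, pow_one]
            rw [h1]
        by_cases hbot : Qs p G (m + 1) = ⊥
        · -- reduced case
          have hD : ∀ x ∈ ⁅Qs p G 0, Qs p G m⁆,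
              x ∈ Subgroup.center G ∧ x ^ p = 1 := by
            apply reduce _ inferInstance
            intro N hN hNne
            haveI := hN
            have h1 := (quotIH N hNne).2 0 m
            rw [show 0 + m + 1 = m + 1 by omega, hbot, Subgroup.map_bot] at h1
            exact le_bot_iff.mp h1
          rw [hbot]
          by_cases hp2 : p = 2
          · -- p = 2
            subst hp2
            rcases Nat.lt_or_ge m 2 with hm2 | hm2
            · -- m = 1 : G is abelian
              have hm1' : m = 1 := by omega
              subst hm1'
              unfold IsPowerful at hpow
              rw [if_pos rfl] at hpow
              have h4 : powOf (⊤ : Subgroup G) 4 = Qs 2 G 2 := by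
                rw [Qs_def]; norm_num
              have hbot2 : Qs 2 G 2 = ⊥ := by
                rw [show (2 : ℕ) = 1 + 1 from rfl]; exact hbot
              have habel : ⁅(⊤ : Subgroup G), ⊤⁆ ≤ (⊥ : Subgroup G) := by
                refine hpow.trans ?_
                rw [h4, hbot2]
              exact (Subgroup.commutator_mono le_top le_top).trans habel
            · -- m ≥ 2
              rw [Qs_def 2 m]
              apply commutator_powOf_le inferInstance
              intro v hv x _
              rw [Subgroup.mem_bot]
              have hsz : x ^ 2 ^ m = (x ^ 2 ^ (m - 2)) ^ 4 := by
                have hepow : 2 ^ m = 2 ^ (m - 2) * 4 := by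
                  conv_lhs => rw [show m = (m - 2) + 2 by omega]
                  rw [pow_add]; norm_num
                rw [hepow, pow_mul]
              set z : G := x ^ 2 ^ (m - 2) with hzdef
              have hzQ : z ∈ Qs 2 G (m - 2) := mem_Qs 2 (m - 2) x
              have hcQ : ⁅v, z⁆ ∈ Qs 2 G (m - 1) := by
                have h1 := IHm (m - 2) (by omega) 0 (m - 2) (by omega)
                rw [show m - 2 + 1 = m - 1 by omega] at h1
                exact h1 (Subgroup.commutator_mem_commutator hv hzQ)
              have hεc : ⁅z, ⁅v, z⁆⁆ ∈ Subgroup.center G ∧ ⁅z, ⁅v, z⁆⁆ ^ 2 = 1 := by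
                rcases Nat.lt_or_ge m 3 with hm3 | hm3
                · -- m = 2 : use powerfulness directly
                  have hm2' : m = 2 := by omega
                  subst hm2'
                  unfold IsPowerful at hpow
                  rw [if_pos rfl] at hpow
                  have h4 : powOf (⊤ : Subgroup G) 4 = Qs 2 G 2 := by
                    rw [Qs_def]; norm_num
                  have hc2 : ⁅v, z⁆ ∈ Qs 2 G 2 := by
                    have := hpow.trans h4.le
                    exact this (Subgroup.commutator_mem_commutator
                      (Subgroup.mem_top v) (Subgroup.mem_top z))
                  exact hD _ (Subgroup.commutator_mem_commutator
                    (by rw [Qs_zero]; exact Subgroup.mem_top z) hc2)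
                · -- m ≥ 3 : reduce the commutator ⁅Q_{m-2}, Q_{m-1}⁆
                  have hB'' : ∀ y ∈ ⁅Qs 2 G (m - 2), Qs 2 G (m - 1)⁆,
                      y ∈ Subgroup.center G ∧ y ^ 2 = 1 := by
                    apply reduce _ inferInstance
                    intro N hN hNne
                    have h1 := (quotIH N hNne).2 (m - 2) (m - 1)
                    have h2 : Qs 2 G (m - 2 + (m - 1) + 1) ≤ Qs 2 G (m + 1) :=
                      Qs_anti 2 (by omega)
                    have h3 := h1.trans (Subgroup.map_mono h2)
                    rw [hbot, Subgroup.map_bot] at h3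
                    exact le_bot_iff.mp h3
                  exact hB'' _ (Subgroup.commutator_mem_commutator hzQ hcQ)
              obtain ⟨hεcen, hε2⟩ := hεc
              have hcom1 : Commute ⁅z, ⁅v, z⁆⁆ z :=
                (Subgroup.mem_center_iff.mp hεcen z).symm
              have hcom2 : Commute ⁅z, ⁅v, z⁆⁆ ⁅v, z⁆ :=
                (Subgroup.mem_center_iff.mp hεcen ⁅v, z⁆).symm
              rw [hsz, comm_pow_formula v z 4 hcom1 hcom2]
              have hc2m : ⁅v, z⁆ ^ 2 ∈ Qs 2 G m := by
                have h1 := hPall (m - 1) (mem_powOf hcQ)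
                rwa [show m - 1 + 1 = m by omega] at h1
              have hc4 : ⁅v, z⁆ ^ 4 = 1 := by
                have h1 := hPall m (mem_powOf hc2m)
                rw [hbot, Subgroup.mem_bot] at h1
                rw [show (4 : ℕ) = 2 * 2 from rfl, pow_mul]
                exact h1
              rw [hc4, one_mul, show Nat.choose 4 2 = 6 from rfl,
                show (6 : ℕ) = 2 * 3 from rfl, pow_mul, hε2, one_pow]
          · -- p odd
            have hB' : ∀ y ∈ ⁅Qs p G (m - 1), Qs p G m⁆,
                y ∈ Subgroup.center G ∧ y ^ p = 1 := by
              apply reduce _ inferInstance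
              intro N hN hNne
              have h1 := (quotIH N hNne).2 (m - 1) m
              have h2 : Qs p G (m - 1 + m + 1) ≤ Qs p G (m + 1) :=
                Qs_anti p (by omega)
              have h3 := h1.trans (Subgroup.map_mono h2)
              rw [hbot, Subgroup.map_bot] at h3
              exact le_bot_iff.mp h3
            rw [Qs_def p m]
            apply commutator_powOf_le inferInstance
            intro v hv x _
            rw [Subgroup.mem_bot]
            have hsz : x ^ p ^ m = (x ^ p ^ (m - 1)) ^ p := by
              have hepow : p ^ m = p ^ (m - 1) * p := by
                conv_lhs => rw [show m = (m - 1) + 1 by omega]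
                rw [pow_succ]
              rw [hepow, pow_mul]
            set z : G := x ^ p ^ (m - 1) with hzdef
            have hzQ : z ∈ Qs p G (m - 1) := mem_Qs p (m - 1) x
            have hcQ : ⁅v, z⁆ ∈ Qs p G m := by
              have h1 := IHm (m - 1) (by omega) 0 (m - 1) (by omega)
              rw [show m - 1 + 1 = m by omega] at h1
              exact h1 (Subgroup.commutator_mem_commutator hv hzQ)
            obtain ⟨hεcen, hεp⟩ := hB' _ (Subgroup.commutator_mem_commutator hzQ hcQ)
            have hcom1 : Commute ⁅z, ⁅v, z⁆⁆ z :=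
              (Subgroup.mem_center_iff.mp hεcen z).symm
            have hcom2 : Commute ⁅z, ⁅v, z⁆⁆ ⁅v, z⁆ :=
              (Subgroup.mem_center_iff.mp hεcen ⁅v, z⁆).symm
            rw [hsz, comm_pow_formula v z p hcom1 hcom2]
            have hcp : ⁅v, z⁆ ^ p = 1 := by
              have h1 := hPall m (mem_powOf hcQ)
              rwa [hbot, Subgroup.mem_bot] at h1
            have hchoose : ⁅z, ⁅v, z⁆⁆ ^ p.choose 2 = 1 := by
              obtain ⟨t, ht⟩ := hp.odd_of_ne_two hp2
              have h2 : p.choose 2 = p * t := by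
                rw [Nat.choose_two_right, show p - 1 = 2 * t by omega,
                  show p * (2 * t) = p * t * 2 by ring]
                exact Nat.mul_div_cancel _ (by norm_num)
              rw [h2, pow_mul, hεp, one_pow]
            rw [hcp, hchoose, one_mul]
        · -- quotient reduction
          have h1 := quotReduce 0 m (by rwa [show 0 + m + 1 = m + 1 by omega])
          rwa [show 0 + m + 1 = m + 1 by omega] at h1
      -- dispatch general (i, j)
      intro i j hij
      by_cases hbot : Qs p G (m + 1) = ⊥
      · rcases Nat.eq_zero_or_pos i with hi0 | hi1
        · subst hi0
          have hj : j = m := by omega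
          subst hj
          exact claim0
        rcases Nat.eq_zero_or_pos j with hj0 | hj1
        · subst hj0
          have hi : i = m := by omega
          subst hi
          rw [Subgroup.commutator_comm]
          exact claim0
        -- i ≥ 1, j ≥ 1
        obtain ⟨j', rfl⟩ : ∃ j', j = j' + 1 := ⟨j - 1, by omega⟩
        rw [hbot]
        rw [Qs_def p (j' + 1)]
        apply commutator_powOf_le inferInstance
        intro a ha x _
        rw [Subgroup.mem_bot]
        have hsz : x ^ p ^ (j' + 1) = (x ^ p ^ j') ^ p := by
          rw [← pow_mul, ← pow_succ]
        set z : G := x ^ p ^ j' with hzdef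
        have hzQ : z ∈ Qs p G j' := mem_Qs p j' x
        have hcQ : ⁅a, z⁆ ∈ Qs p G m := by
          have h1 := IHm (i + j') (by omega) i j' rfl
          rw [show i + j' + 1 = m by omega] at h1
          exact h1 (Subgroup.commutator_mem_commutator ha hzQ)
        have hε : ⁅z, ⁅a, z⁆⁆ = 1 := by
          have hmem : ⁅z, ⁅a, z⁆⁆ ∈ ⁅Qs p G 0, Qs p G m⁆ :=
            Subgroup.commutator_mem_commutator
              (by rw [Qs_zero]; exact Subgroup.mem_top z) hcQ
          have h1 := claim0 hmem
          rwa [hbot, Subgroup.mem_bot] at h1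
        rw [hsz, comm_pow_formula a z p (by rw [hε]; exact Commute.one_left _)
          (by rw [hε]; exact Commute.one_left _), hε]
        have hcp : ⁅a, z⁆ ^ p = 1 := by
          have h1 := hPall m (mem_powOf hcQ)
          rwa [hbot, Subgroup.mem_bot] at h1
        rw [hcp, one_pow, one_mul]
      · rw [← hij] at hbot ⊢
        exact quotReduce i j hbot
    exact ⟨hPall, fun i j => hMall (i + j) i j rfl⟩

end PowerfulAux

open PowerfulAux in
/-- if `G` is a powerful finite `p`-group and `e` a positive integer, then
`R = G^e` satisfies `[R, R] ≤ R^{pe}`. -/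
theorem powerful_power_subgroup_commutator
    (p : ℕ) (hp : p.Prime) (G : Type) [Group G] [Finite G]
    (hG : IsPGroup p G) (hpow : IsPowerful G p)
    (e : ℕ) (he : 0 < e) :
    ⁅powOf (⊤ : Subgroup G) e, powOf (⊤ : Subgroup G) e⁆ ≤
      powOf (powOf (⊤ : Subgroup G) e) (p * e) := by
  obtain ⟨k, u, hu, he'⟩ :=
    Nat.exists_eq_pow_mul_and_not_dvd (Nat.pos_iff_ne_zero.mp he) p hp.ne_one
  have h1 : powOf (⊤ : Subgroup G) e = Qs p G k := by
    rw [he', powOf_coprime hp hG _ k u hu, Qs_def]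
  have h2 : powOf (powOf (⊤ : Subgroup G) e) (p * e) = powOf (Qs p G k) (p ^ (k + 1)) := by
    rw [h1, he', show p * (p ^ k * u) = p ^ (k + 1) * u by ring,
      powOf_coprime hp hG _ (k + 1) u hu]
  rw [h2, h1]
  have h3 := (grand p hp (Nat.card G) G le_rfl hG hpow).2 k k
  refine h3.trans ?_
  rw [Qs_def p (k + k + 1)]
  apply powOf_le
  intro x _
  have hx : x ^ p ^ (k + k + 1) = (x ^ p ^ k) ^ p ^ (k + 1) := by
    rw [← pow_mul, ← pow_add]
    congr 1
  rw [hx]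
  exact mem_powOf (mem_Qs p k x)
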